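/- Let n ≥ 3 be odd and x, y : Fin n → Bool. Then the graph M_{x,y} has a perfect matching if and only if |x ∧ y| is odd. -/

import Mathlib

/-- Cyclic successor on `Fin n`. -/
def cycSucc {n : ℕ} (i : Fin n) : Fin n := ⟨(i.val + 1) % n, Nat.mod_lt _ i.pos⟩

/-- The graph `M_{x,y}` on the `6n` vertices `Fin n × Fin 6`, where for `i : Fin n` the
vertex `(i, 0)` is `t_i`, `(i, 1)` is `b_i`, `(i, 2)` is `k_i^t`, `(i, 3)` is `k_i^b`,
`(i, 4)` is `ℓ_i^t`, and `(i, 5)` is `ℓ_i^b`.  For each `i` (indices mod `n`) the edges are: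
`{k_i^t, ℓ_i^b}` and `{k_i^b, ℓ_i^t}` always; `{t_i, t_{i+1}}` and `{b_i, b_{i+1}}` if
`x i = false` or `y i = false`; `{t_i, k_i^t}` and `{b_i, k_i^b}` if `x i = true`;
`{t_{i+1}, ℓ_i^t}` and `{b_{i+1}, ℓ_i^b}` if `y i = true`. -/
def Mxy (n : ℕ) (x y : Fin n → Bool) : SimpleGraph (Fin n × Fin 6) :=
  SimpleGraph.fromEdgeSet { e | ∃ i : Fin n,
    e = s((i, 2), (i, 5)) ∨ e = s((i, 3), (i, 4)) ∨
    ((x i = false ∨ y i = false) ∧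
      (e = s((i, 0), (cycSucc i, 0)) ∨ e = s((i, 1), (cycSucc i, 1)))) ∨
    (x i = true ∧ (e = s((i, 0), (i, 2)) ∨ e = s((i, 1), (i, 3)))) ∨
    (y i = true ∧ (e = s((cycSucc i, 0), (i, 4)) ∨ e = s((cycSucc i, 1), (i, 5)))) }


open Fin.NatCast

def cycPred {n : ℕ} (i : Fin n) : Fin n := ⟨(i.val + (n-1)) % n, Nat.mod_lt _ i.pos⟩

lemma cycSucc_val {n : ℕ} (i : Fin n) :
    (cycSucc i).val = if i.val + 1 = n then 0 else i.val + 1 := by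
  have h := i.isLt
  show (i.val + 1) % n = _
  split
  · simp [*]
  · exact Nat.mod_eq_of_lt (by omega)

lemma cycPred_val {n : ℕ} (i : Fin n) :
    (cycPred i).val = if i.val = 0 then n - 1 else i.val - 1 := by
  have h := i.isLt
  have h0 := i.pos
  show (i.val + (n-1)) % n = _
  split
  · rw [Nat.mod_eq_of_lt (by omega)]; omega
  · have : i.val + (n-1) = (i.val - 1) + n := by omega
    rw [this, Nat.add_mod_right, Nat.mod_eq_of_lt (by omega)]

lemma cycSucc_cycPred {n : ℕ} (i : Fin n) : cycSucc (cycPred i) = i := by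
  have h := i.isLt
  have h0 := i.pos
  apply Fin.ext
  rw [cycSucc_val, cycPred_val]
  split <;> split <;> omega

lemma cycPred_cycSucc {n : ℕ} (i : Fin n) : cycPred (cycSucc i) = i := by
  have h := i.isLt
  have h0 := i.pos
  apply Fin.ext
  rw [cycPred_val, cycSucc_val]
  split <;> split <;> omega

lemma cycSucc_inj {n : ℕ} {i j : Fin n} (h : cycSucc i = cycSucc j) : i = j := by
  rw [← cycPred_cycSucc i, h, cycPred_cycSucc]

lemma cycSucc_ne {n : ℕ} (hn : 2 ≤ n) (i : Fin n) : cycSucc i ≠ i := by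
  have h := i.isLt
  intro hc
  have := congrArg Fin.val hc
  rw [cycSucc_val] at this
  split at this <;> omega

lemma cycSucc_cycSucc_ne {n : ℕ} (hn : 3 ≤ n) (i : Fin n) : cycSucc (cycSucc i) ≠ i := by
  have h := i.isLt
  intro hc
  have := congrArg Fin.val hc
  rw [cycSucc_val, cycSucc_val] at this
  split at this <;> split at this <;> omega

/-- number of crossings among indices `< k` -/
def CC (n : ℕ) [NeZero n] (x y : Fin n → Bool) (k : ℕ) : ℕ :=
  ((Finset.range k).filter (fun j : ℕ => (x (j : Fin n) && y (j : Fin n)) = true)).card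

lemma CC_succ (n : ℕ) [NeZero n] (x y : Fin n → Bool) (k : ℕ) :
    CC n x y (k+1) = CC n x y k + if (x (k : Fin n) && y (k : Fin n)) = true then 1 else 0 := by
  unfold CC
  rw [Finset.range_add_one, Finset.filter_insert]
  split <;> simp [Finset.card_insert_of_notMem, *]

lemma CC_eq_card (n : ℕ) [NeZero n] (x y : Fin n → Bool) :
    CC n x y n = (Finset.univ.filter fun i => x i = true ∧ y i = true).card := by
  unfold CC
  rw [Finset.card_filter, Finset.card_filter,
    ← Fin.sum_univ_eq_sum_range (fun j : ℕ => if (x (j : Fin n) && y (j : Fin n)) = true then 1 else 0) n]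
  apply Finset.sum_congr rfl
  intro i _
  simp [Fin.cast_val_eq_self, Bool.and_eq_true]

def pp (n : ℕ) [NeZero n] (x y : Fin n → Bool) (i : Fin n) : Bool :=
  decide ((CC n x y i.val + i.val) % 2 = 0)

lemma pp_step (n : ℕ) [NeZero n] (x y : Fin n → Bool) (hn : 2 ≤ n) (hodd : Odd n)
    (hm : Odd (CC n x y n)) (i : Fin n) :
    pp n x y (cycSucc i) = if x i && y i then pp n x y i else !(pp n x y i) := by
  have hlt := i.isLt
  have hcast : ((i.val : ℕ) : Fin n) = i := Fin.cast_val_eq_self i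
  have hC := CC_succ n x y i.val
  rw [hcast] at hC
  unfold pp
  have hv := cycSucc_val i
  rcases Nat.lt_or_ge (i.val + 1) n with h | h
  · rw [if_neg (by omega)] at hv
    rw [hv, hC]
    rcases hxy : x i && y i with _ | _
    · simp only [hxy, Bool.false_eq_true, if_false, ← decide_not, decide_eq_decide,
        true_iff, iff_true]
      omega
    · simp only [hxy, if_true, decide_eq_decide, true_iff, iff_true]
      omega
  · have hn1 : i.val + 1 = n := by omega
    rw [if_pos hn1] at hv
    rw [hv]
    obtain ⟨c, hc⟩ := hm
    obtain ⟨d, hd⟩ := hodd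
    rw [hn1] at hC
    have h0 : CC n x y 0 = 0 := by simp [CC]
    rw [h0]
    rcases hxy : x i && y i with _ | _ <;> rw [hxy] at hC <;>
      simp only [Bool.false_eq_true, if_false, if_true, add_zero] at hC
    · simp only [hxy, Bool.false_eq_true, if_false, ← decide_not, decide_eq_decide,
        true_iff, iff_true]
      omega
    · simp only [hxy, if_true, decide_eq_decide, true_iff, iff_true]
      omega

def ff (n : ℕ) [NeZero n] (x y : Fin n → Bool) (v : Fin n × Fin 6) : Fin n × Fin 6 :=
  let i := v.1
  let j := cycPred i
  if v.2 = 0 then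
    if pp n x y i then (if x i && y i then (i,2) else (cycSucc i,0))
    else (if x j && y j then (j,4) else (j,0))
  else if v.2 = 1 then
    if pp n x y i then (if x j && y j then (j,5) else (j,1))
    else (if x i && y i then (i,3) else (cycSucc i,1))
  else if v.2 = 2 then
    if x i && y i && pp n x y i then (i,0) else (i,5)
  else if v.2 = 3 then
    if x i && y i && !pp n x y i then (i,1) else (i,4)
  else if v.2 = 4 then
    if x i && y i && !pp n x y i then (cycSucc i,0) else (i,3)
  else
    if x i && y i && pp n x y i then (cycSucc i,1) else (i,2)

lemma ff_invol (n : ℕ) [NeZero n] (x y : Fin n → Bool) (hn : 3 ≤ n) (hodd : Odd n)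
    (hm : Odd (CC n x y n)) (v : Fin n × Fin 6) : ff n x y (ff n x y v) = v := by
  obtain ⟨i, s⟩ := v
  have hsi := pp_step n x y (by omega) hodd hm i
  have hpj := pp_step n x y (by omega) hodd hm (cycPred i)
  rw [cycSucc_cycPred] at hpj
  rcases hci : x i && y i with _ | _ <;> rcases hcj : x (cycPred i) && y (cycPred i) with _ | _ <;>
    rw [hci] at hsi <;> rw [hcj] at hpj <;>
    simp only [if_true, Bool.false_eq_true, if_false] at hsi hpj <;>
    rcases hp : pp n x y i with _ | _ <;> rw [hp] at hsi hpj <;> simp at hpj <;>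
    fin_cases s <;>
    simp [ff, hsi, hpj, hp, hci, hcj, cycSucc_cycPred, cycPred_cycSucc]

lemma bool_nand {a b : Bool} (h : ¬((a && b) = true)) : a = false ∨ b = false := by
  rcases a <;> rcases b <;> simp_all

section EdgeLemmas
variable {n : ℕ} [NeZero n] {x y : Fin n → Bool}

lemma prod_ne_snd {i j : Fin n} {a b : Fin 6} (h : a ≠ b) : (i, a) ≠ (j, b) := by
  simp [Prod.ext_iff]; tauto

lemma adj_kl (i : Fin n) : (Mxy n x y).Adj (i,2) (i,5) := by
  simp only [Mxy, SimpleGraph.fromEdgeSet_adj, Set.mem_setOf_eq]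
  exact ⟨⟨i, by tauto⟩, prod_ne_snd (by decide)⟩

lemma adj_kl' (i : Fin n) : (Mxy n x y).Adj (i,3) (i,4) := by
  simp only [Mxy, SimpleGraph.fromEdgeSet_adj, Set.mem_setOf_eq]
  exact ⟨⟨i, by tauto⟩, prod_ne_snd (by decide)⟩

lemma adj_tt (hn : 3 ≤ n) {i : Fin n} (h : x i = false ∨ y i = false) :
    (Mxy n x y).Adj (i,0) (cycSucc i,0) := by
  simp only [Mxy, SimpleGraph.fromEdgeSet_adj, Set.mem_setOf_eq]
  refine ⟨⟨i, by tauto⟩, ?_⟩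
  simp [Prod.ext_iff]
  intro hc
  exact absurd hc.symm (cycSucc_ne (by omega) i)

lemma adj_bb (hn : 3 ≤ n) {i : Fin n} (h : x i = false ∨ y i = false) :
    (Mxy n x y).Adj (i,1) (cycSucc i,1) := by
  simp only [Mxy, SimpleGraph.fromEdgeSet_adj, Set.mem_setOf_eq]
  refine ⟨⟨i, by tauto⟩, ?_⟩
  simp [Prod.ext_iff]
  intro hc
  exact absurd hc.symm (cycSucc_ne (by omega) i)

lemma adj_tk {i : Fin n} (h : x i = true) : (Mxy n x y).Adj (i,0) (i,2) := by
  simp only [Mxy, SimpleGraph.fromEdgeSet_adj, Set.mem_setOf_eq]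
  exact ⟨⟨i, by tauto⟩, prod_ne_snd (by decide)⟩

lemma adj_bk {i : Fin n} (h : x i = true) : (Mxy n x y).Adj (i,1) (i,3) := by
  simp only [Mxy, SimpleGraph.fromEdgeSet_adj, Set.mem_setOf_eq]
  exact ⟨⟨i, by tauto⟩, prod_ne_snd (by decide)⟩

lemma adj_tl {i : Fin n} (h : y i = true) : (Mxy n x y).Adj (cycSucc i,0) (i,4) := by
  simp only [Mxy, SimpleGraph.fromEdgeSet_adj, Set.mem_setOf_eq]
  exact ⟨⟨i, by tauto⟩, prod_ne_snd (by decide)⟩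

lemma adj_bl {i : Fin n} (h : y i = true) : (Mxy n x y).Adj (cycSucc i,1) (i,5) := by
  simp only [Mxy, SimpleGraph.fromEdgeSet_adj, Set.mem_setOf_eq]
  exact ⟨⟨i, by tauto⟩, prod_ne_snd (by decide)⟩

end EdgeLemmas

lemma ff_adj (n : ℕ) [NeZero n] (x y : Fin n → Bool) (hn : 3 ≤ n) (v : Fin n × Fin 6) :
    (Mxy n x y).Adj v (ff n x y v) := by
  obtain ⟨i, s⟩ := v
  fin_cases s
  · show (Mxy n x y).Adj (i,0) (ff n x y (i,0))
    by_cases hp : pp n x y i = true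
    · by_cases hci : (x i && y i) = true
      · rw [show ff n x y (i,0) = (i,2) by simp [ff, hp, hci]]
        exact adj_tk (by simp [Bool.and_eq_true] at hci; tauto : x i = true)
      · rw [show ff n x y (i,0) = (cycSucc i,0) by simp [ff, hp, hci]]
        exact adj_tt hn (bool_nand hci)
    · by_cases hcj : (x (cycPred i) && y (cycPred i)) = true
      · rw [show ff n x y (i,0) = (cycPred i,4) by simp [ff, hp, hcj]]
        have := adj_tl (x := x) (y := y) (by simp [Bool.and_eq_true] at hcj; tauto : y (cycPred i) = true)
        rwa [cycSucc_cycPred] at this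
      · rw [show ff n x y (i,0) = (cycPred i,0) by simp [ff, hp, hcj]]
        have := adj_tt (x := x) (y := y) hn (bool_nand hcj)
        rw [cycSucc_cycPred] at this
        exact this.symm
  · show (Mxy n x y).Adj (i,1) (ff n x y (i,1))
    by_cases hp : pp n x y i = true
    · by_cases hcj : (x (cycPred i) && y (cycPred i)) = true
      · rw [show ff n x y (i,1) = (cycPred i,5) by simp [ff, hp, hcj]]
        have := adj_bl (x := x) (y := y) (by simp [Bool.and_eq_true] at hcj; tauto : y (cycPred i) = true)
        rwa [cycSucc_cycPred] at this
      · rw [show ff n x y (i,1) = (cycPred i,1) by simp [ff, hp, hcj]]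
        have := adj_bb (x := x) (y := y) hn (bool_nand hcj)
        rw [cycSucc_cycPred] at this
        exact this.symm
    · by_cases hci : (x i && y i) = true
      · rw [show ff n x y (i,1) = (i,3) by simp [ff, hp, hci]]
        exact adj_bk (by simp [Bool.and_eq_true] at hci; tauto : x i = true)
      · rw [show ff n x y (i,1) = (cycSucc i,1) by simp [ff, hp, hci]]
        exact adj_bb hn (bool_nand hci)
  · show (Mxy n x y).Adj (i,2) (ff n x y (i,2))
    by_cases hc : (x i && y i && pp n x y i) = true
    · rw [show ff n x y (i,2) = (i,0) by simp [ff, hc]]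
      have hx : x i = true := by simp [Bool.and_eq_true] at hc; tauto
      exact (adj_tk hx).symm
    · rw [show ff n x y (i,2) = (i,5) by simp [ff, hc]]
      exact adj_kl i
  · show (Mxy n x y).Adj (i,3) (ff n x y (i,3))
    by_cases hc : (x i && y i && !pp n x y i) = true
    · rw [show ff n x y (i,3) = (i,1) by simp [ff, hc]]
      have hx : x i = true := by simp [Bool.and_eq_true] at hc; tauto
      exact (adj_bk hx).symm
    · rw [show ff n x y (i,3) = (i,4) by simp [ff, hc]]
      exact adj_kl' i
  · show (Mxy n x y).Adj (i,4) (ff n x y (i,4))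
    by_cases hc : (x i && y i && !pp n x y i) = true
    · rw [show ff n x y (i,4) = (cycSucc i,0) by simp [ff, hc]]
      have hy : y i = true := by simp [Bool.and_eq_true] at hc; tauto
      exact (adj_tl hy).symm
    · rw [show ff n x y (i,4) = (i,3) by simp [ff, hc]]
      exact (adj_kl' i).symm
  · show (Mxy n x y).Adj (i,5) (ff n x y (i,5))
    by_cases hc : (x i && y i && pp n x y i) = true
    · rw [show ff n x y (i,5) = (cycSucc i,1) by simp [ff, hc]]
      have hy : y i = true := by simp [Bool.and_eq_true] at hc; tauto
      exact (adj_bl hy).symm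
    · rw [show ff n x y (i,5) = (i,2) by simp [ff, hc]]
      exact (adj_kl i).symm

lemma exists_pm (n : ℕ) [NeZero n] (x y : Fin n → Bool) (hn : 3 ≤ n) (hodd : Odd n)
    (hm : Odd (CC n x y n)) : ∃ M : (Mxy n x y).Subgraph, M.IsPerfectMatching := by
  refine ⟨⟨Set.univ, fun v w => ff n x y v = w, ?_, ?_, ?_⟩, ?_⟩
  · intro v w h
    rw [← h]
    exact ff_adj n x y hn v
  · intro v w _
    trivial
  · refine ⟨fun v w h => ?_⟩
    rw [← h, ff_invol n x y hn hodd hm]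
  · rw [SimpleGraph.Subgraph.isPerfectMatching_iff]
    intro v
    exact ⟨ff n x y v, rfl, fun w hw => Eq.symm (hw : ff n x y v = w)⟩


section Forward
variable {n : ℕ} [NeZero n] {x y : Fin n → Bool}

lemma nbrs_k_t {i : Fin n} {w} (h : (Mxy n x y).Adj (i,2) w) :
    w = (i,5) ∨ (x i = true ∧ w = (i,0)) := by
  simp only [Mxy, SimpleGraph.fromEdgeSet_adj, Set.mem_setOf_eq] at h
  obtain ⟨⟨j, hj⟩, -⟩ := h
  simp only [Sym2.eq_iff, Prod.mk.injEq] at hj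
  simp at hj
  rcases hj with ⟨rfl, rfl⟩ | ⟨hx, rfl, rfl⟩
  · exact Or.inl rfl
  · exact Or.inr ⟨hx, rfl⟩

lemma nbrs_k_b {i : Fin n} {w} (h : (Mxy n x y).Adj (i,3) w) :
    w = (i,4) ∨ (x i = true ∧ w = (i,1)) := by
  simp only [Mxy, SimpleGraph.fromEdgeSet_adj, Set.mem_setOf_eq] at h
  obtain ⟨⟨j, hj⟩, -⟩ := h
  simp only [Sym2.eq_iff, Prod.mk.injEq] at hj
  simp at hj
  rcases hj with ⟨rfl, rfl⟩ | ⟨hx, rfl, rfl⟩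
  · exact Or.inl rfl
  · exact Or.inr ⟨hx, rfl⟩

lemma nbrs_l_t {i : Fin n} {w} (h : (Mxy n x y).Adj (i,4) w) :
    w = (i,3) ∨ (y i = true ∧ w = (cycSucc i,0)) := by
  simp only [Mxy, SimpleGraph.fromEdgeSet_adj, Set.mem_setOf_eq] at h
  obtain ⟨⟨j, hj⟩, -⟩ := h
  simp only [Sym2.eq_iff, Prod.mk.injEq] at hj
  simp at hj
  rcases hj with ⟨rfl, rfl⟩ | ⟨hy, rfl, rfl⟩
  · exact Or.inl rfl
  · exact Or.inr ⟨hy, rfl⟩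

lemma nbrs_l_b {i : Fin n} {w} (h : (Mxy n x y).Adj (i,5) w) :
    w = (i,2) ∨ (y i = true ∧ w = (cycSucc i,1)) := by
  simp only [Mxy, SimpleGraph.fromEdgeSet_adj, Set.mem_setOf_eq] at h
  obtain ⟨⟨j, hj⟩, -⟩ := h
  simp only [Sym2.eq_iff, Prod.mk.injEq] at hj
  simp at hj
  rcases hj with ⟨rfl, rfl⟩ | ⟨hy, rfl, rfl⟩
  · exact Or.inl rfl
  · exact Or.inr ⟨hy, rfl⟩

lemma nbrs_t {i : Fin n} {w} (h : (Mxy n x y).Adj (i,0) w) :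
    ((x i = false ∨ y i = false) ∧ w = (cycSucc i,0)) ∨ (x i = true ∧ w = (i,2)) ∨
      ∃ j, i = cycSucc j ∧
        (((x j = false ∨ y j = false) ∧ w = (j,0)) ∨ (y j = true ∧ w = (j,4))) := by
  simp only [Mxy, SimpleGraph.fromEdgeSet_adj, Set.mem_setOf_eq] at h
  obtain ⟨⟨j, hj⟩, -⟩ := h
  simp only [Sym2.eq_iff, Prod.mk.injEq] at hj
  simp at hj
  rcases hj with ⟨hxy', ⟨rfl, rfl⟩ | ⟨hi, rfl⟩⟩ | ⟨hx, rfl, rfl⟩ | ⟨hy, hi, rfl⟩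
  · exact Or.inl ⟨hxy', rfl⟩
  · exact Or.inr (Or.inr ⟨j, hi, Or.inl ⟨hxy', rfl⟩⟩)
  · exact Or.inr (Or.inl ⟨hx, rfl⟩)
  · exact Or.inr (Or.inr ⟨j, hi, Or.inr ⟨hy, rfl⟩⟩)

lemma nbrs_b {i : Fin n} {w} (h : (Mxy n x y).Adj (i,1) w) :
    ((x i = false ∨ y i = false) ∧ w = (cycSucc i,1)) ∨ (x i = true ∧ w = (i,3)) ∨
      ∃ j, i = cycSucc j ∧
        (((x j = false ∨ y j = false) ∧ w = (j,1)) ∨ (y j = true ∧ w = (j,5))) := by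
  simp only [Mxy, SimpleGraph.fromEdgeSet_adj, Set.mem_setOf_eq] at h
  obtain ⟨⟨j, hj⟩, -⟩ := h
  simp only [Sym2.eq_iff, Prod.mk.injEq] at hj
  simp at hj
  rcases hj with ⟨hxy', ⟨rfl, rfl⟩ | ⟨hi, rfl⟩⟩ | ⟨hx, rfl, rfl⟩ | ⟨hy, hi, rfl⟩
  · exact Or.inl ⟨hxy', rfl⟩
  · exact Or.inr (Or.inr ⟨j, hi, Or.inl ⟨hxy', rfl⟩⟩)
  · exact Or.inr (Or.inl ⟨hx, rfl⟩)
  · exact Or.inr (Or.inr ⟨j, hi, Or.inr ⟨hy, rfl⟩⟩)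

variable {M : (Mxy n x y).Subgraph} (hM : ∀ v, ∃! w, M.Adj v w)

include hM

lemma force_kl {i : Fin n} (hc : ¬((x i && y i) = true)) :
    M.Adj (i,2) (i,5) ∧ M.Adj (i,3) (i,4) := by
  rcases bool_nand hc with hx | hy
  · constructor
    · obtain ⟨w, hw, -⟩ := hM (i,2)
      rcases nbrs_k_t (M.adj_sub hw) with rfl | ⟨hx', -⟩
      · exact hw
      · rw [hx'] at hx; cases hx
    · obtain ⟨w, hw, -⟩ := hM (i,3)
      rcases nbrs_k_b (M.adj_sub hw) with rfl | ⟨hx', -⟩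
      · exact hw
      · rw [hx'] at hx; cases hx
  · constructor
    · obtain ⟨w, hw, -⟩ := hM (i,5)
      rcases nbrs_l_b (M.adj_sub hw) with rfl | ⟨hy', -⟩
      · exact hw.symm
      · rw [hy'] at hy; cases hy
    · obtain ⟨w, hw, -⟩ := hM (i,4)
      rcases nbrs_l_t (M.adj_sub hw) with rfl | ⟨hy', -⟩
      · exact hw.symm
      · rw [hy'] at hy; cases hy

lemma chainT {i : Fin n} :
    M.Adj (i,0) (i,2) ↔ M.Adj (i,5) (cycSucc i,1) := by
  constructor
  · intro h
    obtain ⟨w, hw, -⟩ := hM (i,5)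
    rcases nbrs_l_b (M.adj_sub hw) with rfl | ⟨-, rfl⟩
    · have := (hM (i,2)).unique hw.symm h.symm
      simp [Prod.ext_iff] at this
    · exact hw
  · intro h
    obtain ⟨w, hw, -⟩ := hM (i,2)
    rcases nbrs_k_t (M.adj_sub hw) with rfl | ⟨-, rfl⟩
    · have := (hM (i,5)).unique hw.symm h
      simp [Prod.ext_iff] at this
    · exact hw.symm

lemma chainB {i : Fin n} :
    M.Adj (i,1) (i,3) ↔ M.Adj (i,4) (cycSucc i,0) := by
  constructor
  · intro h
    obtain ⟨w, hw, -⟩ := hM (i,4)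
    rcases nbrs_l_t (M.adj_sub hw) with rfl | ⟨-, rfl⟩
    · have := (hM (i,3)).unique hw.symm h.symm
      simp [Prod.ext_iff] at this
    · exact hw
  · intro h
    obtain ⟨w, hw, -⟩ := hM (i,3)
    rcases nbrs_k_b (M.adj_sub hw) with rfl | ⟨-, rfl⟩
    · have := (hM (i,4)).unique hw.symm h
      simp [Prod.ext_iff] at this
    · exact hw.symm

end Forward

lemma bool_of_iff {a b : Bool} (h : (a = true) ↔ ¬ (b = true)) : a = !b := by
  rcases a <;> rcases b <;> simp_all

open Classical in
noncomputable def PB (n : ℕ) [NeZero n] (x y : Fin n → Bool) (M : (Mxy n x y).Subgraph)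
    (i : Fin n) : Bool :=
  decide (M.Adj (i,0) (if (x i && y i) = true then ((i,2) : Fin n × Fin 6) else (cycSucc i,0)))

open Classical in
noncomputable def QB (n : ℕ) [NeZero n] (x y : Fin n → Bool) (M : (Mxy n x y).Subgraph)
    (i : Fin n) : Bool :=
  decide (M.Adj (i,1) (if (x i && y i) = true then ((i,3) : Fin n × Fin 6) else (cycSucc i,1)))

section Step
variable {n : ℕ} [NeZero n] {x y : Fin n → Bool} {M : (Mxy n x y).Subgraph}

lemma stepP (hn : 3 ≤ n) (hM : ∀ v, ∃! w, M.Adj v w) (i : Fin n) :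
    PB n x y M (cycSucc i) =
      !(if (x i && y i) = true then QB n x y M i else PB n x y M i) := by
  rcases hcr : (x i && y i) with _ | _
  · -- no crossing at i
    have hforce := force_kl hM (show ¬((x i && y i) = true) by simp [hcr])
    have key : M.Adj (cycSucc i,0)
        (if (x (cycSucc i) && y (cycSucc i)) = true then ((cycSucc i,2) : Fin n × Fin 6)
          else (cycSucc (cycSucc i),0))
        ↔ ¬ M.Adj (i,0) (cycSucc i,0) := by
      constructor
      · intro hr hl
        have heq := (hM (cycSucc i,0)).unique hr hl.symm
        revert heq
        split <;> intro heq <;> simp [Prod.ext_iff] at heq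
        exact cycSucc_cycSucc_ne hn i heq
      · intro hl
        obtain ⟨w, hw, -⟩ := hM (cycSucc i,0)
        rcases nbrs_t (M.adj_sub hw) with ⟨hxy', rfl⟩ | ⟨hx', rfl⟩ | ⟨j, hij, hcase⟩
        · rw [if_neg (by rcases hxy' with h|h <;> simp [h])]
          exact hw
        · by_cases hci' : (x (cycSucc i) && y (cycSucc i)) = true
          · rw [if_pos hci']; exact hw
          · exfalso
            have hf := (force_kl hM hci').1
            have heq := (hM (cycSucc i,2)).unique hw.symm hf
            simp [Prod.ext_iff] at heq
        · have hji : j = i := cycSucc_inj hij.symm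
          rw [hji] at hcase
          rcases hcase with ⟨-, rfl⟩ | ⟨hy', rfl⟩
          · exact absurd hw.symm hl
          · exfalso
            have heq := (hM (i,4)).unique hw.symm hforce.2.symm
            simp [Prod.ext_iff] at heq
    have h1 : PB n x y M (cycSucc i) = true ↔ M.Adj (cycSucc i,0)
        (if (x (cycSucc i) && y (cycSucc i)) = true then ((cycSucc i,2) : Fin n × Fin 6)
          else (cycSucc (cycSucc i),0)) := by simp [PB]
    have h2 : PB n x y M i = true ↔ M.Adj (i,0) (cycSucc i,0) := by
      simp only [PB, decide_eq_true_eq]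
      rw [if_neg (by simp [hcr])]
    simp only [Bool.false_eq_true, if_false]
    exact bool_of_iff (by rw [h1, h2]; exact key)
  · -- crossing at i
    have hx : x i = true ∧ y i = true := by simpa [Bool.and_eq_true] using hcr
    have key : M.Adj (cycSucc i,0)
        (if (x (cycSucc i) && y (cycSucc i)) = true then ((cycSucc i,2) : Fin n × Fin 6)
          else (cycSucc (cycSucc i),0))
        ↔ ¬ M.Adj (i,1) (i,3) := by
      constructor
      · intro hr hBl
        have h4 := (chainB hM).mp hBl
        have heq := (hM (cycSucc i,0)).unique hr h4.symm
        revert heq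
        split <;> intro heq <;> simp [Prod.ext_iff] at heq
      · intro hnB
        obtain ⟨w, hw, -⟩ := hM (cycSucc i,0)
        rcases nbrs_t (M.adj_sub hw) with ⟨hxy', rfl⟩ | ⟨hx', rfl⟩ | ⟨j, hij, hcase⟩
        · rw [if_neg (by rcases hxy' with h|h <;> simp [h])]
          exact hw
        · by_cases hci' : (x (cycSucc i) && y (cycSucc i)) = true
          · rw [if_pos hci']; exact hw
          · exfalso
            have hf := (force_kl hM hci').1
            have heq := (hM (cycSucc i,2)).unique hw.symm hf
            simp [Prod.ext_iff] at heq
        · have hji : j = i := cycSucc_inj hij.symm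
          rw [hji] at hcase
          rcases hcase with ⟨hxy', rfl⟩ | ⟨hy', rfl⟩
          · rcases hxy' with h | h
            · rw [hx.1] at h; cases h
            · rw [hx.2] at h; cases h
          · exact absurd ((chainB hM).mpr hw.symm) hnB
    have h1 : PB n x y M (cycSucc i) = true ↔ M.Adj (cycSucc i,0)
        (if (x (cycSucc i) && y (cycSucc i)) = true then ((cycSucc i,2) : Fin n × Fin 6)
          else (cycSucc (cycSucc i),0)) := by simp [PB]
    have h2 : QB n x y M i = true ↔ M.Adj (i,1) (i,3) := by
      simp only [QB, decide_eq_true_eq]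
      rw [if_pos hcr]
    simp only [eq_self_iff_true, if_true]
    exact bool_of_iff (by rw [h1, h2]; exact key)

lemma stepQ (hn : 3 ≤ n) (hM : ∀ v, ∃! w, M.Adj v w) (i : Fin n) :
    QB n x y M (cycSucc i) =
      !(if (x i && y i) = true then PB n x y M i else QB n x y M i) := by
  rcases hcr : (x i && y i) with _ | _
  · have hforce := force_kl hM (show ¬((x i && y i) = true) by simp [hcr])
    have key : M.Adj (cycSucc i,1)
        (if (x (cycSucc i) && y (cycSucc i)) = true then ((cycSucc i,3) : Fin n × Fin 6)
          else (cycSucc (cycSucc i),1))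
        ↔ ¬ M.Adj (i,1) (cycSucc i,1) := by
      constructor
      · intro hr hl
        have heq := (hM (cycSucc i,1)).unique hr hl.symm
        revert heq
        split <;> intro heq <;> simp [Prod.ext_iff] at heq
        exact cycSucc_cycSucc_ne hn i heq
      · intro hl
        obtain ⟨w, hw, -⟩ := hM (cycSucc i,1)
        rcases nbrs_b (M.adj_sub hw) with ⟨hxy', rfl⟩ | ⟨hx', rfl⟩ | ⟨j, hij, hcase⟩
        · rw [if_neg (by rcases hxy' with h|h <;> simp [h])]
          exact hw
        · by_cases hci' : (x (cycSucc i) && y (cycSucc i)) = true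
          · rw [if_pos hci']; exact hw
          · exfalso
            have hf := (force_kl hM hci').2
            have heq := (hM (cycSucc i,3)).unique hw.symm hf
            simp [Prod.ext_iff] at heq
        · have hji : j = i := cycSucc_inj hij.symm
          rw [hji] at hcase
          rcases hcase with ⟨-, rfl⟩ | ⟨hy', rfl⟩
          · exact absurd hw.symm hl
          · exfalso
            have heq := (hM (i,5)).unique hw.symm hforce.1.symm
            simp [Prod.ext_iff] at heq
    have h1 : QB n x y M (cycSucc i) = true ↔ M.Adj (cycSucc i,1)
        (if (x (cycSucc i) && y (cycSucc i)) = true then ((cycSucc i,3) : Fin n × Fin 6)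
          else (cycSucc (cycSucc i),1)) := by simp [QB]
    have h2 : QB n x y M i = true ↔ M.Adj (i,1) (cycSucc i,1) := by
      simp only [QB, decide_eq_true_eq]
      rw [if_neg (by simp [hcr])]
    simp only [Bool.false_eq_true, if_false]
    exact bool_of_iff (by rw [h1, h2]; exact key)
  · have hx : x i = true ∧ y i = true := by simpa [Bool.and_eq_true] using hcr
    have key : M.Adj (cycSucc i,1)
        (if (x (cycSucc i) && y (cycSucc i)) = true then ((cycSucc i,3) : Fin n × Fin 6)
          else (cycSucc (cycSucc i),1))
        ↔ ¬ M.Adj (i,0) (i,2) := by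
      constructor
      · intro hr hTl
        have h5 := (chainT hM).mp hTl
        have heq := (hM (cycSucc i,1)).unique hr h5.symm
        revert heq
        split <;> intro heq <;> simp [Prod.ext_iff] at heq
      · intro hnT
        obtain ⟨w, hw, -⟩ := hM (cycSucc i,1)
        rcases nbrs_b (M.adj_sub hw) with ⟨hxy', rfl⟩ | ⟨hx', rfl⟩ | ⟨j, hij, hcase⟩
        · rw [if_neg (by rcases hxy' with h|h <;> simp [h])]
          exact hw
        · by_cases hci' : (x (cycSucc i) && y (cycSucc i)) = true
          · rw [if_pos hci']; exact hw
          · exfalso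
            have hf := (force_kl hM hci').2
            have heq := (hM (cycSucc i,3)).unique hw.symm hf
            simp [Prod.ext_iff] at heq
        · have hji : j = i := cycSucc_inj hij.symm
          rw [hji] at hcase
          rcases hcase with ⟨hxy', rfl⟩ | ⟨hy', rfl⟩
          · rcases hxy' with h | h
            · rw [hx.1] at h; cases h
            · rw [hx.2] at h; cases h
          · exact absurd ((chainT hM).mpr hw.symm) hnT
    have h1 : QB n x y M (cycSucc i) = true ↔ M.Adj (cycSucc i,1)
        (if (x (cycSucc i) && y (cycSucc i)) = true then ((cycSucc i,3) : Fin n × Fin 6)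
          else (cycSucc (cycSucc i),1)) := by simp [QB]
    have h2 : PB n x y M i = true ↔ M.Adj (i,0) (i,2) := by
      simp only [PB, decide_eq_true_eq]
      rw [if_pos hcr]
    simp only [eq_self_iff_true, if_true]
    exact bool_of_iff (by rw [h1, h2]; exact key)

end Step

lemma natCast_succ_fin (n : ℕ) [NeZero n] (hn : 2 ≤ n) (k : ℕ) :
    ((k+1 : ℕ) : Fin n) = cycSucc ((k : ℕ) : Fin n) := by
  apply Fin.ext
  show ((k+1 : ℕ) : Fin n).val = (((k : ℕ) : Fin n).val + 1) % n
  rw [Fin.val_natCast, Fin.val_natCast]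
  conv_lhs => rw [Nat.add_mod]
  rw [Nat.mod_eq_of_lt (show 1 < n by omega)]

lemma forward (n : ℕ) [NeZero n] (x y : Fin n → Bool) (hn : 3 ≤ n) (hodd : Odd n)
    (M : (Mxy n x y).Subgraph) (hM : M.IsPerfectMatching) : Odd (CC n x y n) := by
  rw [Nat.odd_iff]
  by_contra hev
  have hev : CC n x y n % 2 = 0 := by omega
  have hu := SimpleGraph.Subgraph.isPerfectMatching_iff.mp hM
  have sp := stepP hn hu
  have sq := stepQ hn hu
  have inv : ∀ k : ℕ,
      PB n x y M (k : Fin n) =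
        xor (decide (k % 2 = 1))
          (if CC n x y k % 2 = 0 then PB n x y M 0 else QB n x y M 0) ∧
      QB n x y M (k : Fin n) =
        xor (decide (k % 2 = 1))
          (if CC n x y k % 2 = 0 then QB n x y M 0 else PB n x y M 0) := by
    intro k
    induction k with
    | zero => simp [CC]
    | succ k ih =>
      obtain ⟨ih1, ih2⟩ := ih
      rw [natCast_succ_fin n (by omega) k, sp, sq, CC_succ, ih1, ih2]
      rcases hc : (x (k : Fin n) && y (k : Fin n)) with _ | _ <;>
        simp only [hc, Bool.false_eq_true, if_false, if_true, add_zero] <;>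
        rcases Nat.mod_two_eq_zero_or_one k with hk | hk <;>
        rcases Nat.mod_two_eq_zero_or_one (CC n x y k) with hC | hC <;>
        constructor <;>
        simp [Nat.add_mod, hk, hC]
  have h0 := (inv n).1
  rw [Fin.natCast_self] at h0
  have hn2 : n % 2 = 1 := Nat.odd_iff.mp hodd
  rw [hev] at h0
  simp [hn2] at h0

theorem Mxy_perfectMatching_iff_odd (n : ℕ) (hn : 3 ≤ n) (hodd : Odd n)
    (x y : Fin n → Bool) :
    (∃ M : (Mxy n x y).Subgraph, M.IsPerfectMatching) ↔
      Odd (Finset.univ.filter fun i => x i = true ∧ y i = true).card := by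
  haveI : NeZero n := ⟨by omega⟩
  rw [← CC_eq_card n x y]
  constructor
  · rintro ⟨M, hM⟩
    exact forward n x y hn hodd M hM
  · intro hm
    exact exists_pm n x y hn hodd hm
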